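/- Let Δ be a finite simplicial complex on vertex set [n] and let Δ* = {[n]∖F : F ∈ Δ} be its dual order filter. Then for every i, the multiset of eigenvalues of the Laplacian in dimension i of Δ equals the multiset of eigenvalues of the Laplacian in dimension n−i−2 of Δ*: s_i(Δ) = s_{n−i−2}(Δ*). Explicitly, the map φ_i : C_i(Δ) → C_{n−i−2}(Δ*) defined by [F] ↦ σ(F)[[n]∖F], with σ(F) = (−1)^{Σ_{j∈F} j}, satisfies φ_{i+1}^{−1} ∘ ∂_{Δ*, n−i−2} ∘ φ_i = −∂*_{Δ, i+1}, and hence conjugates L_{n−i−2}(Δ*) to L_i(Δ). -/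

import Mathlib

open Finset Matrix

namespace SpecRec

variable {V : Type*} [LinearOrder V] [Fintype V]

/-- The incidence sign `(−1)^{#{x ∈ G : x < v}}` where `v` is the unique element
of `F∖G` (for `G ⊂ F` with `|F| = |G|+1`). -/
def sgn (G F : Finset V) : ℝ :=
  (-1 : ℝ) ^ ((G.filter fun x => ∃ v ∈ F \ G, x < v).card)

/-- Entry of the simplicial boundary matrix: `±1` if `G` is a facet of `F`,
and `0` otherwise. -/
def bnd (G F : Finset V) : ℝ :=
  if G ⊆ F ∧ G.card + 1 = F.card then sgn G F else 0

/-- The faces of the simplicial pair `(K,K')` of cardinality `k`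
(dimension `k−1`); these index the relative `(k−1)`-chains. -/
abbrev pface (K K' : Finset (Finset V)) (k : ℕ) :=
  {F : Finset V // F ∈ K ∧ F ∉ K' ∧ F.card = k}

/-- The matrix (in the natural face bases) of the relative boundary map of the
pair `(K,K')` from chains spanned by faces of cardinality `k` to chains spanned
by faces of cardinality `j` (nonzero only when `j = k − 1`). -/
def bmat (K K' : Finset (Finset V)) (j k : ℕ) :
    Matrix (pface K K' j) (pface K K' k) ℝ :=
  fun G F => bnd G.1 F.1

/-- The combinatorial Laplacian `L = ∂∂* + ∂*∂` of the pair `(K,K')` acting on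
chains spanned by faces of cardinality `k` (dimension `k−1`). -/
noncomputable def lap (K K' : Finset (Finset V)) (k : ℕ) :
    Matrix (pface K K' k) (pface K K' k) ℝ :=
  bmat K K' k (k + 1) * (bmat K K' k (k + 1))ᵀ +
    (bmat K K' (k - 1) k)ᵀ * bmat K K' (k - 1) k

end SpecRec

open SpecRec

/-! ### Auxiliary lemmas -/

section Aux

/-- The sign `σ(F) = (−1)^{Σ_{j∈F} j}`. -/
noncomputable def dsign {n : ℕ} (A : Finset (Fin n)) : ℝ := (-1 : ℝ) ^ (∑ j ∈ A, (j : ℕ))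

lemma dsign_sq {n : ℕ} (A : Finset (Fin n)) : dsign A * dsign A = 1 := by
  rw [dsign, ← mul_pow]; norm_num

lemma neg_one_pow_congr_nat {a b : ℕ} (h : a % 2 = b % 2) : ((-1 : ℝ)) ^ a = (-1) ^ b := by
  rw [← Nat.div_add_mod a 2, ← Nat.div_add_mod b 2, h, pow_add, pow_add, pow_mul, pow_mul]
  norm_num

lemma sgn_card {V : Type*} [LinearOrder V] [Fintype V] (G F : Finset V) (v : V)
    (hv : F \ G = {v}) :
    sgn G F = (-1 : ℝ) ^ ((G.filter fun x => x < v).card) := by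
  rw [sgn]
  congr 1
  apply congrArg
  apply Finset.filter_congr
  intro x _
  simp [hv]

end Aux

section Core
variable {n : ℕ}

/-- The key sign identity: complementation turns the boundary entry `∂[B,A]`
into `σ(A)σ(B)·∂*[Aᶜ,Bᶜ]`. -/
lemma bnd_compl (A B : Finset (Fin n)) :
    bnd Aᶜ Bᶜ = dsign A * dsign B * bnd B A := by
  have hA : A.card ≤ n := by simpa using Finset.card_le_univ A
  have hcond : (Aᶜ ⊆ Bᶜ ∧ Aᶜ.card + 1 = Bᶜ.card) ↔ (B ⊆ A ∧ B.card + 1 = A.card) := by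
    rw [Finset.compl_subset_compl, Finset.card_compl, Finset.card_compl, Fintype.card_fin]
    constructor <;> rintro ⟨h1, h2⟩ <;> exact ⟨h1, by omega⟩
  by_cases h : B ⊆ A ∧ B.card + 1 = A.card
  · rw [bnd, bnd, if_pos (hcond.mpr h), if_pos h]
    obtain ⟨h1, h2⟩ := h
    obtain ⟨v, hv⟩ : ∃ v, A \ B = {v} := by
      apply Finset.card_eq_one.mp
      rw [Finset.card_sdiff_of_subset h1]; omega
    have hvAB : v ∈ A \ B := by rw [hv]; exact Finset.mem_singleton_self v
    have hvA : v ∈ A := (Finset.mem_sdiff.mp hvAB).1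
    have hvB : v ∉ B := (Finset.mem_sdiff.mp hvAB).2
    have hAeq : A = insert v B := by
      have := Finset.sdiff_union_of_subset h1
      rw [hv] at this
      rw [← this, Finset.insert_eq]
    have hsum : (∑ j ∈ A, (j : ℕ)) = (v : ℕ) + ∑ j ∈ B, (j : ℕ) := by
      rw [hAeq, Finset.sum_insert hvB]
    have hvc : Bᶜ \ Aᶜ = {v} := by rw [compl_sdiff_compl, hv]
    have e1 : sgn B A = (-1 : ℝ) ^ ((B.filter fun x => x < v).card) := by
      have h' := sgn_card B A v (by convert hv using 2 <;> congr!)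
      rw [h']
    have e2 : sgn Aᶜ Bᶜ = (-1 : ℝ) ^ (((Aᶜ).filter fun x => x < v).card) := by
      have h' := sgn_card Aᶜ Bᶜ v (by convert hvc using 2 <;> congr!)
      rw [h']
    have hBc : Bᶜ = insert v Aᶜ := by
      have hsub : Aᶜ ⊆ Bᶜ := Finset.compl_subset_compl.mpr h1
      have := Finset.sdiff_union_of_subset hsub
      rw [hvc] at this
      rw [← this, Finset.insert_eq]
    have hvAc : v ∉ Aᶜ := by simp [hvA]
    have hcount : (B.filter fun x => x < v).card + ((Aᶜ).filter fun x => x < v).card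
        = (v : ℕ) := by
      have hpart : (B.filter fun x => x < v).card + ((Bᶜ).filter fun x => x < v).card
          = ((univ : Finset (Fin n)).filter fun x => x < v).card := by
        rw [← Finset.card_union_of_disjoint
            (Finset.disjoint_filter_filter disjoint_compl_right),
          ← Finset.filter_union, Finset.union_compl]
      have hBcf : ((Bᶜ).filter fun x => x < v) = (Aᶜ).filter fun x => x < v := by
        rw [hBc, Finset.filter_insert, if_neg (lt_irrefl v)]
      have huniv : ((univ : Finset (Fin n)).filter fun x => x < v).card = (v : ℕ) := by
        have h : (univ : Finset (Fin n)).filter (fun x => x < v) = Finset.Iio v := by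
          ext x; simp
        rw [h, Fin.card_Iio]
      rw [hBcf] at hpart
      rw [hpart, huniv]
    rw [e1, e2, dsign, dsign, ← pow_add, ← pow_add]
    apply neg_one_pow_congr_nat
    omega
  · rw [bnd, bnd, if_neg (fun hc => h (hcond.mp hc)), if_neg h, mul_zero]

/-- Complementation is a bijection between the `a`-element faces of the dual
order filter and the `b`-element faces of `K`, when `a + b = n`. -/
def cEquiv (K : Finset (Finset (Fin n))) (a b : ℕ) (hab : a + b = n) :
    pface (K.image fun F => Fᶜ) ∅ a ≃ pface K ∅ b where
  toFun F := ⟨F.1ᶜ, by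
      obtain ⟨hmem, -, -⟩ := F.2
      obtain ⟨G, hG, hGe⟩ := Finset.mem_image.mp hmem
      have hGF : G = F.1ᶜ := by rw [← hGe, compl_compl]
      rwa [hGF] at hG,
    Finset.notMem_empty _, by
      rw [Finset.card_compl, Fintype.card_fin, F.2.2.2]; omega⟩
  invFun G := ⟨G.1ᶜ, Finset.mem_image_of_mem _ G.2.1, Finset.notMem_empty _, by
      rw [Finset.card_compl, Fintype.card_fin, G.2.2.2]; omega⟩
  left_inv F := by apply Subtype.ext; simp
  right_inv G := by apply Subtype.ext; simp

lemma sum1 (K : Finset (Finset (Fin n))) (k : ℕ) (hk : k ≤ n)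
    (X Y : pface (K.image fun F => Fᶜ) ∅ (n - k))
    {it : Fintype (pface (K.image fun F => Fᶜ) ∅ (n - k + 1))}
    {ie : Fintype (pface K ∅ (k - 1))} :
    (@Finset.univ _ it).sum (fun H => bnd X.1 H.1 * bnd Y.1 H.1)
      = dsign X.1ᶜ * ((@Finset.univ _ ie).sum fun E => bnd E.1 X.1ᶜ * bnd E.1 Y.1ᶜ)
          * dsign Y.1ᶜ := by
  rcases Nat.eq_zero_or_pos k with hk0 | hkpos
  · subst hk0
    have hXc : (X.1ᶜ).card = 0 := by
      rw [Finset.card_compl, Fintype.card_fin, X.2.2.2]; omega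
    rw [Finset.sum_eq_zero, Finset.sum_eq_zero]
    · ring
    · intro E _
      rw [bnd, if_neg, zero_mul]
      rintro ⟨-, hcard⟩
      omega
    · intro H _
      have h1 : H.1.card = n - 0 + 1 := H.2.2.2
      have h2 : H.1.card ≤ n := by simpa using Finset.card_le_univ H.1
      omega
  · rw [Finset.mul_sum, Finset.sum_mul]
    apply @Fintype.sum_equiv _ _ _ it ie _ (cEquiv K (n - k + 1) (k - 1) (by omega))
    intro H
    have bX : bnd X.1 H.1 = dsign X.1ᶜ * dsign H.1ᶜ * bnd H.1ᶜ X.1ᶜ := by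
      conv_lhs => rw [← compl_compl X.1, ← compl_compl H.1]
      exact bnd_compl _ _
    have bY : bnd Y.1 H.1 = dsign Y.1ᶜ * dsign H.1ᶜ * bnd H.1ᶜ Y.1ᶜ := by
      conv_lhs => rw [← compl_compl Y.1, ← compl_compl H.1]
      exact bnd_compl _ _
    rw [bX, bY]
    show _ = dsign X.1ᶜ * (bnd H.1ᶜ X.1ᶜ * bnd H.1ᶜ Y.1ᶜ) * dsign Y.1ᶜ
    linear_combination
      (dsign X.1ᶜ * dsign Y.1ᶜ * bnd H.1ᶜ X.1ᶜ * bnd H.1ᶜ Y.1ᶜ) * dsign_sq H.1ᶜ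

lemma sum2 (K : Finset (Finset (Fin n))) (k : ℕ) (hk : k ≤ n)
    (X Y : pface (K.image fun F => Fᶜ) ∅ (n - k))
    {it : Fintype (pface (K.image fun F => Fᶜ) ∅ (n - k - 1))}
    {ie : Fintype (pface K ∅ (k + 1))} :
    (@Finset.univ _ it).sum (fun E => bnd E.1 X.1 * bnd E.1 Y.1)
      = dsign X.1ᶜ * ((@Finset.univ _ ie).sum fun H => bnd X.1ᶜ H.1 * bnd Y.1ᶜ H.1)
          * dsign Y.1ᶜ := by
  rcases eq_or_lt_of_le hk with hkn | hklt
  · subst hkn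
    have hXc : X.1.card = 0 := by rw [X.2.2.2]; omega
    rw [Finset.sum_eq_zero, Finset.sum_eq_zero]
    · ring
    · intro H _
      have h1 : H.1.card = k + 1 := H.2.2.2
      have h2 : H.1.card ≤ k := by simpa using Finset.card_le_univ H.1
      omega
    · intro E _
      rw [bnd, if_neg, zero_mul]
      rintro ⟨-, hcard⟩
      have hE : E.1.card = k - k - 1 := E.2.2.2
      omega
  · rw [Finset.mul_sum, Finset.sum_mul]
    apply @Fintype.sum_equiv _ _ _ it ie _ (cEquiv K (n - k - 1) (k + 1) (by omega))
    intro E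
    have bX : bnd E.1 X.1 = dsign E.1ᶜ * dsign X.1ᶜ * bnd X.1ᶜ E.1ᶜ := by
      conv_lhs => rw [← compl_compl E.1, ← compl_compl X.1]
      exact bnd_compl _ _
    have bY : bnd E.1 Y.1 = dsign E.1ᶜ * dsign Y.1ᶜ * bnd Y.1ᶜ E.1ᶜ := by
      conv_lhs => rw [← compl_compl E.1, ← compl_compl Y.1]
      exact bnd_compl _ _
    rw [bX, bY]
    show _ = dsign X.1ᶜ * (bnd X.1ᶜ E.1ᶜ * bnd Y.1ᶜ E.1ᶜ) * dsign Y.1ᶜ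
    linear_combination
      (dsign X.1ᶜ * dsign Y.1ᶜ * bnd X.1ᶜ E.1ᶜ * bnd Y.1ᶜ E.1ᶜ) * dsign_sq E.1ᶜ

end Core

open Polynomial in
/-- **Laplacian spectra of a complex and of its dual order filter.**
Let `Δ` be a simplicial complex on `[n]` (here the vertex type `Fin n`) and let
`Δ* = {[n]∖F : F ∈ Δ}` be its dual order filter.  Then for every `k ≤ n`, the
multiset of eigenvalues of the Laplacian of `Δ` on faces of cardinality `k`
(dimension `k−1`) equals the multiset of eigenvalues of the Laplacian of `Δ*`
on faces of cardinality `n−k` (dimension `n−k−1`); i.e.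
`s_{i}(Δ) = s_{n−i−2}(Δ*)` for all `i`.  (This is induced by the map
`φ : [F] ↦ σ(F)[[n]∖F]`, `σ(F) = (−1)^{Σ_{j∈F} j}`, which satisfies
`φ_{i+1}⁻¹ ∘ ∂_{Δ*,n−i−2} ∘ φ_i = −∂*_{Δ,i+1}` and hence conjugates
`L_{n−i−2}(Δ*)` to `L_i(Δ)`.) -/
theorem spectrum_dual {n : ℕ} (K : Finset (Finset (Fin n)))
    (hK : ∀ F ∈ K, ∀ G ⊆ F, G ∈ K)           -- `Δ` is a simplicial complex
    (k : ℕ) (hk : k ≤ n) :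
    (lap K ∅ k).charpoly.roots =
      (lap (K.image fun F => Fᶜ) ∅ (n - k)).charpoly.roots := by
  classical
  let e : pface (K.image fun F => Fᶜ) ∅ (n - k) ≃ pface K ∅ k :=
    cEquiv K (n - k) k (by omega)
  let D : Matrix (pface K ∅ k) (pface K ∅ k) ℝ :=
    Matrix.diagonal (fun F => dsign F.1)
  have hmain : lap (K.image fun F => Fᶜ) ∅ (n - k)
      = Matrix.reindex e.symm e.symm (D * lap K ∅ k * D) := by
    ext X Y
    rw [Matrix.reindex_apply, Matrix.submatrix_apply]
    simp only [Equiv.symm_symm]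
    rw [Matrix.mul_diagonal, Matrix.diagonal_mul]
    rw [lap, lap]
    simp only [Matrix.add_apply, Matrix.mul_apply, Matrix.transpose_apply, bmat]
    rw [sum1 K k hk X Y, sum2 K k hk X Y]
    have hX : (e X).1 = X.1ᶜ := rfl
    have hY : (e Y).1 = Y.1ᶜ := rfl
    rw [hX, hY]
    ring
  have hDD : D * D = 1 := by
    rw [Matrix.diagonal_mul_diagonal]
    have h1 : (fun F : pface K ∅ k => dsign F.1 * dsign F.1) = fun _ => (1 : ℝ) :=
      funext fun F => dsign_sq F.1
    rw [h1, Matrix.diagonal_one]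
  have hc1 : (lap (K.image fun F => Fᶜ) ∅ (n - k)).charpoly
      = (D * lap K ∅ k * D).charpoly := by
    rw [hmain, Matrix.charpoly_reindex]
  have hDc : (D.map (C : ℝ → ℝ[X])) * D.map C = 1 := by
    rw [← Matrix.map_mul, hDD, Matrix.map_one _ (map_zero (C : ℝ →+* ℝ[X])) (map_one _)]
  have hc2 : (D * lap K ∅ k * D).charpoly = (lap K ∅ k).charpoly := by
    set A := lap K ∅ k with hA
    have hcomm : (Matrix.scalar (pface K ∅ k) (X : ℝ[X])) * (D.map C)
        = (D.map C) * (Matrix.scalar (pface K ∅ k) (X : ℝ[X])) :=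
      (Matrix.scalar_commute (X : ℝ[X]) (fun r' => Commute.all _ _) (D.map C)).eq
    have hcm : Matrix.charmatrix (D * A * D)
        = (D.map C) * Matrix.charmatrix A * (D.map C) := by
      rw [Matrix.charmatrix, Matrix.charmatrix, RingHom.mapMatrix_apply, RingHom.mapMatrix_apply]
      rw [Matrix.mul_sub, Matrix.sub_mul]
      congr 1
      · rw [← hcomm, Matrix.mul_assoc, hDc, Matrix.mul_one]
      · rw [Matrix.map_mul, Matrix.map_mul]
    rw [Matrix.charpoly, Matrix.charpoly, hcm, Matrix.det_mul, Matrix.det_mul]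
    have hdet : (D.map (C : ℝ → ℝ[X])).det * (D.map C).det = 1 := by
      rw [← Matrix.det_mul, hDc, Matrix.det_one]
    calc (D.map (C : ℝ → ℝ[X])).det * (Matrix.charmatrix A).det * (D.map C).det
        = ((D.map (C : ℝ → ℝ[X])).det * (D.map C).det) * (Matrix.charmatrix A).det := by ring
      _ = (Matrix.charmatrix A).det := by rw [hdet, one_mul]
  rw [hc1, hc2]
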